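/- Define F(n,k) = (-1)^{n+k} (n-k-1)! (k!)^2 H_k(2) / (n+k+1)! for n ≥ k+1, and G(n,k) = 2(-1)^{n+k} (n-k)! (k!)^2 (H_k(2) - 1/(n+1)^2) / ((n+k+1)! (n+1)) for n ≥ k, where H_k(2) = ∑_{j=1}^k 1/j^2. Then for all integers n ≥ k+1 ≥ 1, F(n+1,k) - F(n,k) = G(n,k+1) - G(n,k). -/

import Mathlib

def H2 (k : ℕ) : ℚ := ∑ j ∈ Finset.Icc 1 k, 1 / (j : ℚ) ^ 2

noncomputable def F (n k : ℕ) : ℚ :=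
  (-1 : ℚ) ^ (n + k) * ((n - k - 1).factorial : ℚ) * ((k.factorial : ℚ)) ^ 2 * H2 k
    / ((n + k + 1).factorial : ℚ)

noncomputable def G (n k : ℕ) : ℚ :=
  2 * (-1 : ℚ) ^ (n + k) * ((n - k).factorial : ℚ) * ((k.factorial : ℚ)) ^ 2
    * (H2 k - 1 / ((n : ℚ) + 1) ^ 2) / (((n + k + 1).factorial : ℚ) * ((n : ℚ) + 1))

theorem stmt_18 (n k : ℕ) (h : k + 1 ≤ n) :
    F (n + 1) k - F n k = G n (k + 1) - G n k := by
  obtain ⟨m, rfl⟩ : ∃ m, n = k + 1 + m := ⟨n - (k + 1), by omega⟩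
  simp only [F, G]
  have h1 : k + 1 + m - k - 1 = m := by omega
  have h2 : k + 1 + m + 1 - k - 1 = m + 1 := by omega
  have h3 : k + 1 + m - k = m + 1 := by omega
  have h4 : k + 1 + m - (k + 1) = m := by omega
  have h5 : k + 1 + m + 1 + k + 1 = (k + 1 + m + k + 1) + 1 := by omega
  have h6 : k + 1 + m + (k + 1) + 1 = (k + 1 + m + k + 1) + 1 := by omega
  have h7 : H2 (k + 1) = H2 k + 1 / ((k : ℚ) + 1) ^ 2 := by
    simp [H2, Finset.sum_Icc_succ_top (Nat.one_le_iff_ne_zero.mpr (Nat.succ_ne_zero k))]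
  rw [h1, h2, h3, h4, h5, h6, h7]
  have e1 : (((k + 1 + m + k + 1) + 1).factorial : ℚ)
      = ((k:ℚ) + 1 + m + k + 1 + 1) * ((k + 1 + m + k + 1).factorial : ℚ) := by
    rw [Nat.factorial_succ]; push_cast; ring
  have e2 : ((m + 1).factorial : ℚ) = ((m:ℚ) + 1) * (m.factorial : ℚ) := by
    rw [Nat.factorial_succ]; push_cast; ring
  have e3 : (((k + 1)).factorial : ℚ) = ((k:ℚ) + 1) * (k.factorial : ℚ) := by
    rw [Nat.factorial_succ]; push_cast; ring
  rw [e1, e2, e3]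
  have p1 : (-1 : ℚ) ^ (k + 1 + m + 1 + k) = - (-1 : ℚ) ^ (k + 1 + m + k) := by
    rw [show k + 1 + m + 1 + k = (k + 1 + m + k) + 1 by omega, pow_succ]; ring
  have p2 : (-1 : ℚ) ^ (k + 1 + m + (k + 1)) = - (-1 : ℚ) ^ (k + 1 + m + k) := by
    rw [show k + 1 + m + (k + 1) = (k + 1 + m + k) + 1 by omega, pow_succ]; ring
  rw [p1, p2]
  have nf : ((k + 1 + m + k + 1).factorial : ℚ) ≠ 0 := by
    exact_mod_cast Nat.factorial_ne_zero _
  have nk : ((k : ℚ) + 1) ≠ 0 := by positivity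
  have nn : ((k : ℚ) + 1 + m + 1) ≠ 0 := by positivity
  have nN : ((k:ℚ) + 1 + m + k + 1 + 1) ≠ 0 := by positivity
  push_cast
  field_simp
  ring
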